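/- Fix α(0) ∈ (0,1) and let α be the symmetric a priori measure on {-1,0,1} with α(1) = α(−1) = (1−α(0))/2, and let β_c = 2 + e·α(0)/α(1). For β > β_c, let m(β) ∈ (0,1] denote the magnetization coordinate m of the global maximizer of Φ_{β,α} with ν(1) > ν(−1), where ν is parametrized by (x,m) via (ν(−1), ν(0), ν(1)) = ( (x/2)(1−m), 1−x, (x/2)(1+m) ). Then there exists a constant c > 0 such that lim_{β↓β_c} m(β)/(β−β_c)^{1/2} = c; in particular the mean-field soft-core Widom-Rowlinson model has the mean-field critical exponent 1/2 for the magnetization in the inverse temperature direction. -/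

import Mathlib

open Real Filter Finset Topology

/-- The local state space `{-1, 0, 1}` of the Widom-Rowlinson model. -/
abbrev Spin : Finset ℤ := {-1, 0, 1}

/-- A probability vector on `{-1, 0, 1}`, encoded as a function `ℤ → ℝ`
supported on `{-1, 0, 1}`. -/
def IsProbVec (ν : ℤ → ℝ) : Prop :=
  (∀ s, 0 ≤ ν s) ∧ (∀ s, s ∉ Spin → ν s = 0) ∧ ∑ s ∈ Spin, ν s = 1

/-- Relative entropy `I(ν | α)` on `{-1,0,1}` (with the convention `0 log 0 = 0`,
which holds automatically since `Real.log 0 = 0`). -/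
noncomputable def relEnt (ν α : ℤ → ℝ) : ℝ :=
  ∑ s ∈ Spin, ν s * Real.log (ν s / α s)

/-- The variational functional `Φ_{β,α}(ν) = -β ν(1) ν(-1) - I(ν|α)` of the mean-field
soft-core Widom-Rowlinson model. -/
noncomputable def Phi (β : ℝ) (α ν : ℤ → ℝ) : ℝ :=
  -β * ν 1 * ν (-1) - relEnt ν α

/-- `ν` is a global maximizer of `Φ_{β,α}` on the simplex of probability vectors. -/
def IsMaximizer (β : ℝ) (α ν : ℤ → ℝ) : Prop :=
  IsProbVec ν ∧ ∀ ν' : ℤ → ℝ, IsProbVec ν' → Phi β α ν' ≤ Phi β α ν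

/-- The probability vector on `{-1,0,1}` with occupation density `x` and
magnetization `m`: `(ν(-1), ν(0), ν(1)) = ((x/2)(1-m), 1-x, (x/2)(1+m))`. -/
noncomputable def coordMeasure (x m : ℝ) : ℤ → ℝ := fun s =>
  if s = -1 then x / 2 * (1 - m)
  else if s = 0 then 1 - x
  else if s = 1 then x / 2 * (1 + m)
  else 0


/-- The symmetric a priori measure with hole weight `a0` and
`α(1) = α(-1) = (1 - a0)/2`. -/
noncomputable def symAlpha (a0 : ℝ) : ℤ → ℝ := fun s =>
  if s = 0 then a0
  else if s = 1 then (1 - a0) / 2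
  else if s = -1 then (1 - a0) / 2
  else 0

lemma sum_spin (f : ℤ → ℝ) : ∑ s ∈ Spin, f s = f (-1) + f 0 + f 1 := by
  show ∑ s ∈ ({-1,0,1} : Finset ℤ), f s = _
  rw [Finset.sum_insert (by decide), Finset.sum_insert (by decide), Finset.sum_singleton]
  ring

noncomputable def pert (p q r : ℝ) : ℤ → ℝ := fun s =>
  if s = -1 then p else if s = 0 then q else if s = 1 then r else 0

@[simp] lemma pert_neg (p q r : ℝ) : pert p q r (-1) = p := by simp [pert]
@[simp] lemma pert_zero (p q r : ℝ) : pert p q r 0 = q := by simp [pert]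
@[simp] lemma pert_one (p q r : ℝ) : pert p q r 1 = r := by simp [pert]

lemma isProbVec_pert {p q r : ℝ} (hp : 0 ≤ p) (hq : 0 ≤ q) (hr : 0 ≤ r)
    (hs : p + q + r = 1) : IsProbVec (pert p q r) := by
  refine ⟨fun s => ?_, fun s hs' => ?_, ?_⟩
  · unfold pert; split_ifs <;> simp [hp, hq, hr]
  · simp only [Spin, Finset.mem_insert, Finset.mem_singleton, not_or] at hs'
    unfold pert; split_ifs with h1 h2 h3 <;> first | (exfalso; tauto) | rfl
  · rw [sum_spin]; simpa using hs

lemma Phi_pert (β a0 p q r : ℝ) :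
    Phi β (symAlpha a0) (pert p q r) =
      -β * r * p - (p * Real.log (p / ((1 - a0) / 2)) + q * Real.log (q / a0)
        + r * Real.log (r / ((1 - a0) / 2))) := by
  unfold Phi relEnt
  rw [sum_spin]
  simp [symAlpha, pert]

lemma coord_eq_pert (x m : ℝ) :
    coordMeasure x m = pert (x / 2 * (1 - m)) (1 - x) (x / 2 * (1 + m)) := by
  funext s; simp [coordMeasure, pert]

lemma deriv_term {y A : ℝ} (hy : 0 < y) (hA : 0 < A) :
    HasDerivAt (fun t => (y + t) * Real.log ((y + t) / A)) (Real.log (y / A) + 1) 0 := by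
  have h1 : HasDerivAt (fun t : ℝ => y + t) 1 0 := (hasDerivAt_id 0).const_add y
  have hlog : HasDerivAt (fun t : ℝ => Real.log (y + t)) (1 / y) 0 := by
    have := (Real.hasDerivAt_log (by simpa using hy.ne')).comp 0 h1
    simpa [Function.comp_def] using this
  have hmul : HasDerivAt (fun t : ℝ => (y + t) * (Real.log (y + t) - Real.log A))
      (1 * (Real.log (y + 0) - Real.log A) + (y + 0) * (1 / y)) 0 :=
    h1.mul (hlog.sub_const _)
  have heq : (fun t : ℝ => (y + t) * Real.log ((y + t) / A))
      =ᶠ[𝓝 (0:ℝ)] fun t => (y + t) * (Real.log (y + t) - Real.log A) := by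
    have hmem : Set.Ioi (-y) ∈ 𝓝 (0:ℝ) := Ioi_mem_nhds (by linarith)
    filter_upwards [hmem] with t ht
    rw [Real.log_div (by simp only [Set.mem_Ioi] at ht; linarith) hA.ne']
  have h2 : HasDerivAt (fun t : ℝ => (y + t) * Real.log ((y + t) / A))
      (1 * (Real.log (y + 0) - Real.log A) + (y + 0) * (1 / y)) 0 :=
    HasDerivAt.congr_of_eventuallyEq hmul heq
  convert h2 using 1
  rw [Real.log_div hy.ne' hA.ne']
  simp only [add_zero]
  field_simp

lemma deriv_term_neg {y A : ℝ} (hy : 0 < y) (hA : 0 < A) :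
    HasDerivAt (fun t => (y - t) * Real.log ((y - t) / A)) (-(Real.log (y / A) + 1)) 0 := by
  have hneg : HasDerivAt (fun t : ℝ => -t) (-1) 0 := (hasDerivAt_id 0).neg
  have := HasDerivAt.comp (𝕜 := ℝ) 0 (by simpa using deriv_term hy hA) hneg
  simp only [Function.comp_def, ← sub_eq_add_neg] at this
  exact this.congr_deriv (by ring)


lemma Phi_eq (β a0 : ℝ) (ν : ℤ → ℝ) :
    Phi β (symAlpha a0) ν =
      -β * ν 1 * ν (-1) - (ν (-1) * Real.log (ν (-1) / ((1 - a0) / 2))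
        + ν 0 * Real.log (ν 0 / a0) + ν 1 * Real.log (ν 1 / ((1 - a0) / 2))) := by
  unfold Phi relEnt
  rw [sum_spin]
  simp [symAlpha]

/-- Core blow-up lemma: to leading order, moving mass `t` onto an empty site gains
`-t log t` which beats any linear/quadratic cost. -/
lemma core_blowup {y A A' : ℝ} (C1 C2 : ℝ) (hy : 0 < y) (hA : 0 < A) (hA' : 0 < A') :
    ∀ᶠ t in 𝓝[>] (0:ℝ),
      (0 < C1 * t + C2 * t ^ 2 - t * Real.log (t / A')
          - ((y - t) * Real.log ((y - t) / A) - y * Real.log (y / A)) ∧ t < y) := by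
  set F : ℝ → ℝ := fun t => (y - t) * Real.log ((y - t) / A) with hF
  have hslope : Tendsto (fun t => (F t - F 0) / t) (𝓝[>] (0:ℝ)) (𝓝 (-(Real.log (y / A) + 1))) := by
    have h := (hasDerivAt_iff_tendsto_slope.mp (deriv_term_neg hy hA))
    have h2 := h.mono_left (nhdsWithin_mono _ (fun t (ht : t ∈ Set.Ioi (0:ℝ)) => ne_of_gt ht))
    refine h2.congr ?_
    intro t; simp [slope, F, vsub_eq_sub, div_eq_inv_mul]
  have hlog : Tendsto (fun t : ℝ => -Real.log (t / A')) (𝓝[>] (0:ℝ)) atTop := by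
    have h1 : Tendsto (fun t : ℝ => -Real.log t + Real.log A') (𝓝[>] (0:ℝ)) atTop := by
      apply Filter.tendsto_atTop_add_const_right
      exact tendsto_neg_atBot_atTop.comp Real.tendsto_log_nhdsGT_zero
    refine h1.congr' ?_
    filter_upwards [self_mem_nhdsWithin] with t (ht : 0 < t)
    rw [Real.log_div ht.ne' hA'.ne']
    ring
  have hmain : Tendsto (fun t => (C1 + C2 * t - (F t - F 0) / t) + (-Real.log (t / A')))
      (𝓝[>] (0:ℝ)) atTop := by
    apply Filter.Tendsto.add_atTop (C := C1 + C2 * 0 - (-(Real.log (y / A) + 1))) _ hlog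
    have hc : Tendsto (fun t : ℝ => C1 + C2 * t) (𝓝[>] (0:ℝ)) (𝓝 (C1 + C2 * 0)) := by
      apply Filter.Tendsto.mono_left _ nhdsWithin_le_nhds
      exact (continuous_const.add (continuous_const.mul continuous_id)).tendsto 0
    exact hc.sub hslope
  have hpos := hmain.eventually_gt_atTop 0
  filter_upwards [hpos, self_mem_nhdsWithin, Ioo_mem_nhdsGT_of_mem (Set.left_mem_Ico.mpr hy)]
    with t ht (ht0 : 0 < t) hty
  refine ⟨?_, hty.2⟩
  have key : C1 * t + C2 * t ^ 2 - t * Real.log (t / A') - (F t - F 0)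
      = t * ((C1 + C2 * t - (F t - F 0) / t) + (-Real.log (t / A'))) := by
    field_simp
    ring
  have hF0 : F 0 = y * Real.log (y / A) := by simp [F]
  calc (0:ℝ) < t * ((C1 + C2 * t - (F t - F 0) / t) + (-Real.log (t / A'))) :=
        mul_pos ht0 ht
    _ = C1 * t + C2 * t ^ 2 - t * Real.log (t / A') - (F t - F 0) := key.symm
    _ = C1 * t + C2 * t ^ 2 - t * Real.log (t / A')
        - ((y - t) * Real.log ((y - t) / A) - y * Real.log (y / A)) := by rw [hF0]

lemma coords_pos {β a0 : ℝ} {ν : ℤ → ℝ} (ha0 : a0 ∈ Set.Ioo (0:ℝ) 1)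
    (hmax : IsMaximizer β (symAlpha a0) ν) (ha : 0 < ν 1) : 0 < ν (-1) ∧ 0 < ν 0 := by
  obtain ⟨⟨hnn, hsupp, hsum⟩, hopt⟩ := hmax
  have hα1 : 0 < (1 - a0) / 2 := by have := ha0.2; linarith
  have hsum3 : ν (-1) + ν 0 + ν 1 = 1 := by rw [← sum_spin]; exact hsum
  constructor
  · rcases lt_or_eq_of_le (hnn (-1)) with h | h
    · exact h
    exfalso
    -- perturb: move t from site 1 to site -1
    have hev := core_blowup (A := (1 - a0) / 2) (A' := (1 - a0) / 2)
      (-(β * ν 1)) β ha hα1 hα1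
    obtain ⟨t, ⟨hventr, hty⟩, ht0⟩ := (hev.and self_mem_nhdsWithin).exists
    have ht0' : (0:ℝ) < t := ht0
    have hpv : IsProbVec (pert t (ν 0) (ν 1 - t)) :=
      isProbVec_pert ht0'.le (hnn 0) (by linarith) (by linarith)
    have hle := hopt _ hpv
    rw [Phi_pert, Phi_eq] at hle
    rw [← h] at hle
    simp only [mul_zero, zero_mul] at hle
    linarith [hventr, hle]
  · rcases lt_or_eq_of_le (hnn 0) with h | h
    · exact h
    exfalso
    -- perturb: move t from site 1 to site 0
    have hev := core_blowup (A := (1 - a0) / 2) (A' := a0)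
      (β * ν (-1)) 0 ha hα1 ha0.1
    obtain ⟨t, ⟨hventr, hty⟩, ht0⟩ := (hev.and self_mem_nhdsWithin).exists
    have ht0' : (0:ℝ) < t := ht0
    have hpv : IsProbVec (pert (ν (-1)) t (ν 1 - t)) :=
      isProbVec_pert (hnn (-1)) ht0'.le (by linarith) (by linarith)
    have hle := hopt _ hpv
    rw [Phi_pert, Phi_eq] at hle
    rw [← h] at hle
    simp only [mul_zero, zero_mul] at hle
    linarith [hventr, hle]

lemma stationary {β a0 b n0 a : ℝ} (ha0 : a0 ∈ Set.Ioo (0:ℝ) 1)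
    (hb : 0 < b) (hn : 0 < n0) (ha : 0 < a) (hsum : b + n0 + a = 1)
    (hmax : IsMaximizer β (symAlpha a0) (pert b n0 a)) :
    Real.log (a / ((1 - a0) / 2)) + β * b = Real.log (n0 / a0) ∧
    Real.log (b / ((1 - a0) / 2)) + β * a = Real.log (n0 / a0) := by
  obtain ⟨_, hopt⟩ := hmax
  have hα1 : 0 < (1 - a0) / 2 := by have := ha0.2; linarith
  constructor
  · -- perturb a ↦ a + t, n0 ↦ n0 - t
    set h : ℝ → ℝ := fun t => -β * (a + t) * b
      - (b * Real.log (b / ((1 - a0) / 2)) + (n0 - t) * Real.log ((n0 - t) / a0)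
        + (a + t) * Real.log ((a + t) / ((1 - a0) / 2))) with hh
    have hloc : IsLocalMax h 0 := by
      have hmem : Set.Ioo (-a) n0 ∈ 𝓝 (0:ℝ) := Ioo_mem_nhds (by linarith) hn
      filter_upwards [hmem] with t ht
      have hpv : IsProbVec (pert b (n0 - t) (a + t)) :=
        isProbVec_pert hb.le (by linarith [ht.2]) (by linarith [ht.1]) (by linarith)
      have := hopt _ hpv
      rw [Phi_pert] at this
      have h0 : h 0 = Phi β (symAlpha a0) (pert b n0 a) := by
        rw [Phi_pert]; simp [hh]
      have hht : h t = -β * (a + t) * b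
          - (b * Real.log (b / ((1 - a0) / 2)) + (n0 - t) * Real.log ((n0 - t) / a0)
            + (a + t) * Real.log ((a + t) / ((1 - a0) / 2))) := rfl
      rw [h0, hht]
      calc -β * (a + t) * b - _ = Phi β (symAlpha a0) (pert b (n0 - t) (a + t)) := by
            rw [Phi_pert]
        _ ≤ Phi β (symAlpha a0) (pert b n0 a) := hopt _ hpv
    have hda : HasDerivAt h
        (-β * b - (-(Real.log (n0 / a0) + 1) + (Real.log (a / ((1 - a0) / 2)) + 1))) 0 := by
      have h1 : HasDerivAt (fun t : ℝ => -β * (a + t) * b) (-β * b) 0 := by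
        have : HasDerivAt (fun t : ℝ => a + t) 1 0 := (hasDerivAt_id 0).const_add a
        simpa using (this.const_mul (-β)).mul_const b
      have h2 := deriv_term_neg hn ha0.1
      have h3 := deriv_term ha hα1
      have h4 := ((hasDerivAt_const (0:ℝ) (b * Real.log (b / ((1 - a0) / 2)))).fun_add h2).fun_add h3
      have := h1.fun_sub h4
      exact this.congr_deriv (by ring)
    have := hloc.deriv_eq_zero
    rw [hda.deriv] at this
    linarith [this]
  · -- perturb b ↦ b + t, n0 ↦ n0 - t
    set h : ℝ → ℝ := fun t => -β * a * (b + t)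
      - ((b + t) * Real.log ((b + t) / ((1 - a0) / 2)) + (n0 - t) * Real.log ((n0 - t) / a0)
        + a * Real.log (a / ((1 - a0) / 2))) with hh
    have hloc : IsLocalMax h 0 := by
      have hmem : Set.Ioo (-b) n0 ∈ 𝓝 (0:ℝ) := Ioo_mem_nhds (by linarith) hn
      filter_upwards [hmem] with t ht
      have hpv : IsProbVec (pert (b + t) (n0 - t) a) :=
        isProbVec_pert (by linarith [ht.1]) (by linarith [ht.2]) ha.le (by linarith)
      have h0 : h 0 = Phi β (symAlpha a0) (pert b n0 a) := by
        rw [Phi_pert]; simp [hh]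
      rw [h0]
      calc h t = Phi β (symAlpha a0) (pert (b + t) (n0 - t) a) := by
            rw [Phi_pert, hh]
        _ ≤ Phi β (symAlpha a0) (pert b n0 a) := hopt _ hpv
    have hda : HasDerivAt h
        (-β * a - ((Real.log (b / ((1 - a0) / 2)) + 1) + -(Real.log (n0 / a0) + 1))) 0 := by
      have h1 : HasDerivAt (fun t : ℝ => -β * a * (b + t)) (-β * a) 0 := by
        have : HasDerivAt (fun t : ℝ => b + t) 1 0 := (hasDerivAt_id 0).const_add b
        simpa using this.const_mul (-β * a)
      have h2 := deriv_term hb hα1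
      have h3 := deriv_term_neg hn ha0.1
      have h4 := ((h2.fun_add h3).fun_add (hasDerivAt_const (0:ℝ) (a * Real.log (a / ((1 - a0) / 2)))))
      have := h1.fun_sub h4
      exact this.congr_deriv (by ring)
    have := hloc.deriv_eq_zero
    rw [hda.deriv] at this
    linarith [this]

noncomputable def Lf (m : ℝ) : ℝ := Real.log (1 + m) - Real.log (1 - m)
noncomputable def gf (m : ℝ) : ℝ := Lf m / m
noncomputable def cf (m : ℝ) : ℝ := Real.exp (Lf m / 2) + Real.exp (-(Lf m / 2))
noncomputable def Bf (a0 m : ℝ) : ℝ :=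
  gf m * (1 + a0 / ((1 - a0) / 2) * Real.exp (gf m / 2) / cf m)
noncomputable def bcr (a0 : ℝ) : ℝ := 2 + Real.exp 1 * a0 / ((1 - a0) / 2)

lemma cf_pos (m : ℝ) : 0 < cf m := by rw [cf]; positivity

lemma B_eq {a0 β x m : ℝ} (ha0 : a0 ∈ Set.Ioo (0:ℝ) 1) (hx : 0 < x) (hm0 : 0 < m)
    (hm1 : m ≤ 1) (hmax : IsMaximizer β (symAlpha a0) (coordMeasure x m)) :
    m < 1 ∧ Bf a0 m = β := by
  have hα1 : 0 < (1 - a0) / 2 := by have := ha0.2; linarith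
  have h1a0 : (0:ℝ) < 1 - a0 := by linarith [ha0.2]
  obtain ⟨b, n0, a, hbdef, hndef, hadef⟩ :
      ∃ b n0 a : ℝ, b = x / 2 * (1 - m) ∧ n0 = 1 - x ∧ a = x / 2 * (1 + m) :=
    ⟨_, _, _, rfl, rfl, rfl⟩
  have hcoord : coordMeasure x m = pert b n0 a := by
    rw [hbdef, hndef, hadef]; exact coord_eq_pert x m
  rw [hcoord] at hmax
  have ha : 0 < a := by rw [hadef]; nlinarith
  have hpos := coords_pos ha0 hmax (by rw [pert_one]; exact ha)
  have hb : 0 < b := by have := hpos.1; rwa [pert_neg] at this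
  have hn : 0 < n0 := by have := hpos.2; rwa [pert_zero] at this
  have hm1' : m < 1 := by rw [hbdef] at hb; nlinarith
  refine ⟨hm1', ?_⟩
  have hsum : b + n0 + a = 1 := by rw [hbdef, hndef, hadef]; ring
  obtain ⟨eqI, eqII⟩ := stationary ha0 hb hn ha hsum hmax
  have h1m : (0:ℝ) < 1 - m := by linarith
  have h1p : (0:ℝ) < 1 + m := by linarith
  -- Equation A : Lf m = β * x * m
  have eqA : Lf m = β * x * m := by
    have hsub : Real.log (a / ((1 - a0) / 2)) - Real.log (b / ((1 - a0) / 2))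
        = β * (a - b) := by linarith [eqI, eqII]
    rw [Real.log_div ha.ne' hα1.ne', Real.log_div hb.ne' hα1.ne'] at hsub
    have hla : Real.log a = Real.log (x / 2) + Real.log (1 + m) := by
      rw [hadef, Real.log_mul (by linarith : (0:ℝ) < x/2).ne' h1p.ne']
    have hlb : Real.log b = Real.log (x / 2) + Real.log (1 - m) := by
      rw [hbdef, Real.log_mul (by linarith : (0:ℝ) < x/2).ne' h1m.ne']
    have hab : a - b = x * m := by rw [hadef, hbdef]; ring
    rw [hla, hlb, hab] at hsub
    rw [Lf]
    linarith [hsub]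
  have hgx : gf m = β * x := by
    rw [gf, eqA]; field_simp
  have hgm : gf m * m = Lf m := by rw [gf]; field_simp
  have hba : β * a = gf m / 2 + Lf m / 2 := by
    linear_combination β * hadef - hgx / 2 - eqA / 2
  have hbb : β * b = gf m / 2 - Lf m / 2 := by
    linear_combination β * hbdef - hgx / 2 + eqA / 2
  have expI : a = (1 - a0) / 2 * (n0 / a0) * Real.exp (-(β * b)) := by
    have hl : Real.log (a / ((1 - a0) / 2)) = Real.log (n0 / a0) - β * b := by linarith
    have he := congrArg Real.exp hl
    rw [Real.exp_log (div_pos ha hα1), Real.exp_sub,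
      Real.exp_log (div_pos hn ha0.1)] at he
    rw [Real.exp_neg]
    field_simp [ha0.1.ne', (Real.exp_pos (β * b)).ne'] at he ⊢
    linarith [he]
  have expII : b = (1 - a0) / 2 * (n0 / a0) * Real.exp (-(β * a)) := by
    have hl : Real.log (b / ((1 - a0) / 2)) = Real.log (n0 / a0) - β * a := by linarith
    have he := congrArg Real.exp hl
    rw [Real.exp_log (div_pos hb hα1), Real.exp_sub,
      Real.exp_log (div_pos hn ha0.1)] at he
    rw [Real.exp_neg]
    field_simp [ha0.1.ne', (Real.exp_pos (β * a)).ne'] at he ⊢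
    linarith [he]
  have hexpa : Real.exp (-(β * a)) = Real.exp (-(gf m / 2)) * Real.exp (-(Lf m / 2)) := by
    rw [← Real.exp_add, hba]; ring_nf
  have hexpb : Real.exp (-(β * b)) = Real.exp (-(gf m / 2)) * Real.exp (Lf m / 2) := by
    rw [← Real.exp_add, hbb]; ring_nf
  have hax : a + b = x := by rw [hadef, hbdef]; ring
  have hxsum : x = (1 - a0) / 2 * (n0 / a0) * Real.exp (-(gf m / 2)) * cf m := by
    rw [cf]
    linear_combination expI + expII - hax
      + ((1 - a0) / 2 * (n0 / a0)) * (hexpb + hexpa)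
  have hE : (0:ℝ) < Real.exp (gf m / 2) := Real.exp_pos _
  have hc := cf_pos m
  have hkey : x * a0 * Real.exp (gf m / 2) = (1 - a0) / 2 * n0 * cf m := by
    rw [Real.exp_neg] at hxsum
    field_simp [ha0.1.ne', hE.ne'] at hxsum
    linarith [hxsum]
  have hfrac : a0 / ((1 - a0) / 2) * Real.exp (gf m / 2) / cf m = n0 / x := by
    rw [div_eq_div_iff hc.ne' hx.ne']
    field_simp [h1a0.ne']
    linear_combination 2 * hkey
  calc Bf a0 m = gf m * (1 + n0 / x) := by rw [Bf, hfrac]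
    _ = gf m * (1 / x) := by
        congr 1
        rw [hndef]
        field_simp
        ring
    _ = β := by rw [hgx]; field_simp

lemma Lf_zero : Lf 0 = 0 := by simp [Lf]

lemma hasDerivAt_Lf {m : ℝ} (h1 : -1 < m) (h2 : m < 1) :
    HasDerivAt Lf ((1 + m)⁻¹ + (1 - m)⁻¹) m := by
  have hp : HasDerivAt (fun m' : ℝ => 1 + m') 1 m := (hasDerivAt_id m).const_add 1
  have hq : HasDerivAt (fun m' : ℝ => 1 - m') (-1) m := (hasDerivAt_id m).const_sub 1
  have hlp : HasDerivAt (fun m' : ℝ => Real.log (1 + m')) ((1 + m)⁻¹) m := by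
    have := (Real.hasDerivAt_log (by linarith : (1:ℝ) + m ≠ 0)).comp m hp
    simpa [Function.comp_def] using this
  have hlq : HasDerivAt (fun m' : ℝ => Real.log (1 - m')) (-(1 - m)⁻¹) m := by
    have := (Real.hasDerivAt_log (by linarith : (1:ℝ) - m ≠ 0)).comp m hq
    simpa [Function.comp_def] using this
  have := hlp.fun_sub hlq
  exact this.congr_deriv (by ring)

lemma contAt_Lf {m : ℝ} (h1 : -1 < m) (h2 : m < 1) : ContinuousAt Lf m :=
  (hasDerivAt_Lf h1 h2).continuousAt

lemma L2m_mono : StrictMonoOn (fun m => Lf m - 2 * m) (Set.Ico 0 1) := by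
  apply strictMonoOn_of_deriv_pos (convex_Ico 0 1)
  · intro m hm
    exact ((contAt_Lf (by linarith [hm.1]) hm.2).sub (by fun_prop)).continuousWithinAt
  · intro m hm
    rw [interior_Ico] at hm
    have hd : HasDerivAt (fun m => Lf m - 2 * m) ((1 + m)⁻¹ + (1 - m)⁻¹ - 2) m := by
      have h2 : HasDerivAt (fun m' : ℝ => 2 * m') 2 m := by
        simpa using (hasDerivAt_id m).const_mul 2
      exact (hasDerivAt_Lf (by linarith [hm.1]) hm.2).sub h2
    rw [hd.deriv]
    have key : (1 + m)⁻¹ + (1 - m)⁻¹ - 2 = 2 * m ^ 2 / ((1 + m) * (1 - m)) := by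
      have e1 : (1:ℝ) + m ≠ 0 := by nlinarith [hm.1, hm.2]
      have e2 : (1:ℝ) - m ≠ 0 := by nlinarith [hm.2]
      field_simp
      ring
    rw [key]
    have h1 : (0:ℝ) < (1 + m) * (1 - m) := by nlinarith [hm.1, hm.2]
    have hm0 : m ≠ 0 := hm.1.ne'
    positivity
  
lemma L_gt {m : ℝ} (hm : m ∈ Set.Ioo (0:ℝ) 1) : 2 * m < Lf m := by
  have := L2m_mono (Set.mem_Ico.mpr ⟨le_refl 0, one_pos⟩)
    (Set.mem_Ico.mpr ⟨hm.1.le, hm.2⟩) hm.1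
  simp only [Lf_zero] at this
  linarith

lemma L_pos {m : ℝ} (hm : m ∈ Set.Ioo (0:ℝ) 1) : 0 < Lf m := by
  have := L_gt hm; linarith [hm.1]

lemma g_gt {m : ℝ} (hm : m ∈ Set.Ioo (0:ℝ) 1) : 2 < gf m := by
  rw [gf, lt_div_iff₀ hm.1]
  linarith [L_gt hm]

lemma mem_Ioo01 : Set.Ioo (0:ℝ) 1 ∈ 𝓝[>] (0:ℝ) :=
  Ioo_mem_nhdsGT_of_mem (Set.left_mem_Ico.mpr one_pos)

lemma tendsto_L_cube : Tendsto (fun m => (Lf m - 2 * m) / m ^ 3) (𝓝[>] (0:ℝ)) (𝓝 (2/3)) := by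
  apply HasDerivAt.lhopital_zero_nhdsGT
    (f' := fun m => (1 + m)⁻¹ + (1 - m)⁻¹ - 2) (g' := fun m => 3 * m ^ 2)
  · filter_upwards [mem_Ioo01] with m hm
    have h2 : HasDerivAt (fun m' : ℝ => 2 * m') 2 m := by
      simpa using (hasDerivAt_id m).const_mul 2
    exact (hasDerivAt_Lf (by linarith [hm.1]) hm.2).sub h2
  · filter_upwards [mem_Ioo01] with m hm
    simpa using hasDerivAt_pow 3 m
  · filter_upwards [self_mem_nhdsWithin] with m (hm : 0 < m)
    positivity
  · have hc : ContinuousAt (fun m : ℝ => Lf m - 2 * m) 0 :=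
      (contAt_Lf (by norm_num) (by norm_num)).sub (by fun_prop)
    have := hc.tendsto.mono_left (nhdsWithin_le_nhds (s := Set.Ioi (0:ℝ)))
    simpa [Lf_zero] using this
  · have : Tendsto (fun m : ℝ => m ^ 3) (𝓝 0) (𝓝 0) := by
      simpa using (continuous_pow 3).tendsto (0:ℝ)
    exact this.mono_left nhdsWithin_le_nhds
  · have hlim : Tendsto (fun m : ℝ => 2 / (3 * ((1 + m) * (1 - m)))) (𝓝[>] (0:ℝ)) (𝓝 (2/3)) := by
      have hcont : Continuous fun m : ℝ => 3 * ((1 + m) * (1 - m)) := by continuity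
      have : Tendsto (fun m : ℝ => 2 / (3 * ((1 + m) * (1 - m)))) (𝓝 (0:ℝ))
          (𝓝 (2 / (3 * ((1 + 0) * (1 - 0))))) := by
        apply tendsto_const_nhds.div (hcont.tendsto 0)
        norm_num
      have h2 := this.mono_left (nhdsWithin_le_nhds (s := Set.Ioi (0:ℝ)))
      norm_num at h2
      exact h2
    refine hlim.congr' ?_
    filter_upwards [mem_Ioo01] with m hm
    have e1 : (1:ℝ) + m ≠ 0 := by nlinarith [hm.1, hm.2]
    have e2 : (1:ℝ) - m ≠ 0 := by nlinarith [hm.2]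
    have e3 : m ≠ 0 := hm.1.ne'
    field_simp
    ring

lemma tendsto_g_sub : Tendsto (fun m => (gf m - 2) / m ^ 2) (𝓝[>] (0:ℝ)) (𝓝 (2/3)) := by
  refine tendsto_L_cube.congr' ?_
  filter_upwards [self_mem_nhdsWithin] with m (hm : 0 < m)
  rw [gf]
  field_simp

lemma tendsto_g : Tendsto gf (𝓝[>] (0:ℝ)) (𝓝 2) := by
  have hm2 : Tendsto (fun m : ℝ => m ^ 2) (𝓝[>] (0:ℝ)) (𝓝 0) := by
    have := (continuous_pow 2).tendsto (0:ℝ)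
    simpa using this.mono_left nhdsWithin_le_nhds
  have h1 : Tendsto (fun m => (gf m - 2) / m ^ 2 * m ^ 2 + 2) (𝓝[>] (0:ℝ))
      (𝓝 (2/3 * 0 + 2)) := (tendsto_g_sub.mul hm2).add tendsto_const_nhds
  norm_num at h1
  refine h1.congr' ?_
  filter_upwards [self_mem_nhdsWithin] with m (hm : 0 < m)
  field_simp
  ring

lemma tendsto_L0 : Tendsto Lf (𝓝[>] (0:ℝ)) (𝓝 0) := by
  have := (contAt_Lf (m := 0) (by norm_num) (by norm_num)).tendsto.mono_left
    (nhdsWithin_le_nhds (s := Set.Ioi (0:ℝ)))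
  simpa [Lf_zero] using this

lemma tendsto_L0_div (k : ℝ) : Tendsto (fun m => Lf m / k) (𝓝[>] (0:ℝ)) (𝓝 0) := by
  simpa using tendsto_L0.div_const k

lemma tendsto_exp_L (k : ℝ) : Tendsto (fun m => Real.exp (Lf m / k)) (𝓝[>] (0:ℝ)) (𝓝 1) := by
  have := (Real.continuous_exp.tendsto 0).comp (tendsto_L0_div k)
  simp only [Function.comp_def] at this
  simpa using this

lemma tendsto_exp_L_neg (k : ℝ) :
    Tendsto (fun m => Real.exp (-(Lf m / k))) (𝓝[>] (0:ℝ)) (𝓝 1) := by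
  have h0 : Tendsto (fun m => -(Lf m / k)) (𝓝[>] (0:ℝ)) (𝓝 0) := by
    simpa using (tendsto_L0_div k).neg
  have := (Real.continuous_exp.tendsto 0).comp h0
  simp only [Function.comp_def] at this
  simpa using this

lemma tendsto_c : Tendsto cf (𝓝[>] (0:ℝ)) (𝓝 2) := by
  have h := (tendsto_exp_L 2).add (tendsto_exp_L_neg 2)
  have h2 : Tendsto cf (𝓝[>] (0:ℝ)) (𝓝 (1 + 1)) := h
  norm_num at h2
  exact h2

lemma G_deriv : HasDerivAt (fun y : ℝ => y * Real.exp (y / 2)) (2 * Real.exp 1) 2 := by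
  have hid : HasDerivAt (fun y : ℝ => y) 1 2 := hasDerivAt_id 2
  have hhalf : HasDerivAt (fun y : ℝ => y / 2) (1 / 2) 2 := hid.div_const 2
  have hexp : HasDerivAt (fun y : ℝ => Real.exp (y / 2)) (Real.exp (2 / 2) * (1 / 2)) 2 :=
    hhalf.exp
  have h := hid.mul hexp
  have hval : (1:ℝ) * Real.exp (2 / 2) + 2 * (Real.exp (2 / 2) * (1 / 2)) = 2 * Real.exp 1 := by
    norm_num
    ring
  rw [hval] at h
  exact h

lemma tendsto_slope_G :
    Tendsto (fun m => (gf m * Real.exp (gf m / 2) - 2 * Real.exp 1) / (gf m - 2))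
      (𝓝[>] (0:ℝ)) (𝓝 (2 * Real.exp 1)) := by
  have hgne : Tendsto gf (𝓝[>] (0:ℝ)) (𝓝[≠] (2:ℝ)) := by
    rw [tendsto_nhdsWithin_iff]
    refine ⟨tendsto_g, ?_⟩
    filter_upwards [mem_Ioo01] with m hm
    exact (g_gt hm).ne'
  have hs := (hasDerivAt_iff_tendsto_slope.mp G_deriv).comp hgne
  refine hs.congr ?_
  intro m
  simp only [Function.comp, slope, vsub_eq_sub]
  rw [div_eq_inv_mul]
  norm_num
  ring

lemma tendsto_Gg :
    Tendsto (fun m => (gf m * Real.exp (gf m / 2) - 2 * Real.exp 1) / m ^ 2)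
      (𝓝[>] (0:ℝ)) (𝓝 (2 * Real.exp 1 * (2/3))) := by
  have := tendsto_slope_G.mul tendsto_g_sub
  refine this.congr' ?_
  filter_upwards [mem_Ioo01] with m hm
  have hne : gf m - 2 ≠ 0 := by linarith [g_gt hm]
  have hm2 : (m:ℝ) ^ 2 ≠ 0 := pow_ne_zero 2 hm.1.ne'
  field_simp

lemma tendsto_exp_slope :
    Tendsto (fun u : ℝ => (Real.exp u - 1) / u) (𝓝[≠] (0:ℝ)) (𝓝 1) := by
  have := hasDerivAt_iff_tendsto_slope.mp (Real.hasDerivAt_exp 0)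
  rw [Real.exp_zero] at this
  refine this.congr ?_
  intro u
  simp [slope, vsub_eq_sub, div_eq_inv_mul]

lemma tendsto_c2 : Tendsto (fun m => (cf m - 2) / m ^ 2) (𝓝[>] (0:ℝ)) (𝓝 1) := by
  have hLne : Tendsto (fun m => Lf m / 2) (𝓝[>] (0:ℝ)) (𝓝[≠] (0:ℝ)) := by
    rw [tendsto_nhdsWithin_iff]
    refine ⟨tendsto_L0_div 2, ?_⟩
    filter_upwards [mem_Ioo01] with m hm
    have := L_pos hm
    simp only [Set.mem_compl_iff, Set.mem_singleton_iff]
    positivity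
  have hI : Tendsto (fun m => Real.exp (-(Lf m / 4))
      * ((Real.exp (Lf m / 2) - 1) / (Lf m / 2)) * (gf m / 2)) (𝓝[>] (0:ℝ)) (𝓝 1) := by
    have h1 : Tendsto (fun m => Real.exp (-(Lf m / 4))) (𝓝[>] (0:ℝ)) (𝓝 1) :=
      tendsto_exp_L_neg 4
    have h2 : Tendsto (fun m => (Real.exp (Lf m / 2) - 1) / (Lf m / 2))
        (𝓝[>] (0:ℝ)) (𝓝 1) := tendsto_exp_slope.comp hLne
    have h3 : Tendsto (fun m => gf m / 2) (𝓝[>] (0:ℝ)) (𝓝 1) := by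
      simpa using tendsto_g.div_const 2
    have := (h1.mul h2).mul h3
    norm_num at this
    exact this
  have := hI.pow 2
  norm_num at this
  refine this.congr' ?_
  filter_upwards [mem_Ioo01] with m hm
  have hm0 : m ≠ 0 := hm.1.ne'
  have hL0 : Lf m ≠ 0 := (L_pos hm).ne'
  have hA : Real.exp (Lf m / 4) ≠ 0 := (Real.exp_pos _).ne'
  have hexp2 : Real.exp (Lf m / 2) = Real.exp (Lf m / 4) * Real.exp (Lf m / 4) := by
    rw [← Real.exp_add]; ring_nf
  have hexpm2 : Real.exp (-(Lf m / 2)) = (Real.exp (Lf m / 4) * Real.exp (Lf m / 4))⁻¹ := by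
    rw [Real.exp_neg, hexp2]
  have hexpm4 : Real.exp (-(Lf m / 4)) = (Real.exp (Lf m / 4))⁻¹ := Real.exp_neg _
  rw [cf, gf, hexp2, hexpm2, hexpm4]
  field_simp
  ring

lemma tendsto_R {a0 : ℝ} (ha0 : a0 ∈ Set.Ioo (0:ℝ) 1) :
    Tendsto (fun m => (Bf a0 m - bcr a0) / m ^ 2) (𝓝[>] (0:ℝ))
      (𝓝 (2/3 + a0 / ((1 - a0) / 2) * Real.exp 1 / 6)) := by
  have hmain := tendsto_g_sub.add
    ((((tendsto_Gg.sub (tendsto_c2.const_mul (Real.exp 1))).div tendsto_c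
      (by norm_num)).const_mul (a0 / ((1 - a0) / 2))))
  have hval : (2:ℝ)/3 + a0 / ((1 - a0) / 2)
      * ((2 * Real.exp 1 * (2/3) - Real.exp 1 * 1) / 2)
      = 2/3 + a0 / ((1 - a0) / 2) * Real.exp 1 / 6 := by ring
  rw [hval] at hmain
  refine hmain.congr' ?_
  filter_upwards [mem_Ioo01] with m hm
  have hm0 : m ≠ 0 := hm.1.ne'
  have hc : cf m ≠ 0 := (cf_pos m).ne'
  have h1a0 : (1:ℝ) - a0 ≠ 0 := by have := ha0.2; intro h; linarith [ha0.2]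
  rw [Bf, bcr]
  simp only [Pi.div_apply]
  field_simp
  ring

lemma Lp_inv {m : ℝ} (h1 : -1 < m) (h2 : m < 1) :
    (1 + m)⁻¹ + (1 - m)⁻¹ = 2 / (1 - m ^ 2) := by
  have e1 : (1:ℝ) + m ≠ 0 := by linarith
  have e2 : (1:ℝ) - m ≠ 0 := by linarith
  have e3 : (1:ℝ) - m ^ 2 ≠ 0 := by nlinarith
  field_simp
  ring

/-- Key inequality : `L(m)² (1-m²) ≤ 4 m²` on `[0,1)`. -/
lemma L_sq_le {m : ℝ} (hm : m ∈ Set.Ico (0:ℝ) 1) : Lf m ^ 2 * (1 - m ^ 2) ≤ 4 * m ^ 2 := by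
  -- first : the auxiliary function w1 is nonneg
  have hw1 : ∀ m' ∈ Set.Ico (0:ℝ) 1, 0 ≤ 8 * m' - 4 * Lf m' + 2 * m' * Lf m' ^ 2 := by
    have hmono : MonotoneOn (fun m' => 8 * m' - 4 * Lf m' + 2 * m' * Lf m' ^ 2)
        (Set.Ico (0:ℝ) 1) := by
      have hderiv : ∀ m' ∈ Set.Ioo (-1:ℝ) 1, HasDerivAt
          (fun m' => 8 * m' - 4 * Lf m' + 2 * m' * Lf m' ^ 2)
          (8 - 4 * ((1 + m')⁻¹ + (1 - m')⁻¹)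
            + (2 * Lf m' ^ 2 + 2 * m' * (2 * Lf m' * ((1 + m')⁻¹ + (1 - m')⁻¹)))) m' := by
        intro m' hm'
        have hL := hasDerivAt_Lf hm'.1 hm'.2
        have h1 : HasDerivAt (fun m' : ℝ => 8 * m') 8 m' := by
          simpa using (hasDerivAt_id m').const_mul 8
        have h2 : HasDerivAt (fun m' : ℝ => 4 * Lf m')
            (4 * ((1 + m')⁻¹ + (1 - m')⁻¹)) m' := hL.const_mul 4
        have h3 : HasDerivAt (fun m' : ℝ => Lf m' ^ 2)
            (2 * Lf m' * ((1 + m')⁻¹ + (1 - m')⁻¹)) m' := by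
          have := hL.fun_pow 2
          norm_num at this
          convert this using 1 <;> try ring
        have h4 : HasDerivAt (fun m' : ℝ => 2 * m') 2 m' := by
          simpa using (hasDerivAt_id m').const_mul 2
        have h5 := (h4.fun_mul h3)
        have h6 := (h1.fun_sub h2).fun_add h5
        convert h6 using 1 <;> try ring
      apply monotoneOn_of_deriv_nonneg (convex_Ico 0 1)
      · intro m' hm'
        exact ((hderiv m' ⟨by linarith [hm'.1], hm'.2⟩).continuousAt).continuousWithinAt
      · intro m' hm'
        rw [interior_Ico] at hm'
        exact ((hderiv m' ⟨by linarith [hm'.1], hm'.2⟩).differentiableAt).differentiableWithinAt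
      · intro m' hm'
        rw [interior_Ico] at hm'
        rw [(hderiv m' ⟨by linarith [hm'.1], hm'.2⟩).deriv]
        have h1m : (-1:ℝ) < m' := by linarith [hm'.1]
        rw [Lp_inv h1m hm'.2]
        have hD : (0:ℝ) < 1 - m' ^ 2 := by nlinarith [hm'.1, hm'.2]
        have key : 8 - 4 * (2 / (1 - m' ^ 2))
            + (2 * Lf m' ^ 2 + 2 * m' * (2 * Lf m' * (2 / (1 - m' ^ 2))))
            = (8 * (1 - m' ^ 2) - 8 + (2 * Lf m' ^ 2 * (1 - m' ^ 2) + 8 * m' * Lf m'))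
              / (1 - m' ^ 2) := by
          field_simp
          ring
        rw [key]
        apply div_nonneg _ hD.le
        have hL2 := L_gt ⟨hm'.1, hm'.2⟩
        nlinarith [mul_lt_mul_of_pos_left hL2 (by linarith [hm'.1] : (0:ℝ) < 8 * m'),
          mul_nonneg (mul_nonneg (by norm_num : (0:ℝ) ≤ 2) (sq_nonneg (Lf m'))) hD.le,
          hm'.1]
    intro m' hm'
    have := hmono (Set.mem_Ico.mpr ⟨le_refl 0, one_pos⟩) hm' hm'.1
    simpa [Lf_zero] using this
  -- second : w is monotone hence nonneg
  have hmono2 : MonotoneOn (fun m' => 4 * m' ^ 2 - Lf m' ^ 2 * (1 - m' ^ 2))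
      (Set.Ico (0:ℝ) 1) := by
    have hderiv : ∀ m' ∈ Set.Ioo (-1:ℝ) 1, HasDerivAt
        (fun m' => 4 * m' ^ 2 - Lf m' ^ 2 * (1 - m' ^ 2))
        (4 * (2 * m') - ((2 * Lf m' * ((1 + m')⁻¹ + (1 - m')⁻¹)) * (1 - m' ^ 2)
          + Lf m' ^ 2 * (-(2 * m')))) m' := by
      intro m' hm'
      have hL := hasDerivAt_Lf hm'.1 hm'.2
      have hsq : HasDerivAt (fun m' : ℝ => m' ^ 2) (2 * m') m' := by
        simpa using hasDerivAt_pow 2 m'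
      have h3 : HasDerivAt (fun m' : ℝ => Lf m' ^ 2)
          (2 * Lf m' * ((1 + m')⁻¹ + (1 - m')⁻¹)) m' := by
        have := hL.fun_pow 2
        norm_num at this
        convert this using 1 <;> try ring
      have h4 : HasDerivAt (fun m' : ℝ => 1 - m' ^ 2) (-(2 * m')) m' := by
        exact hsq.const_sub 1
      exact (hsq.const_mul 4).fun_sub (h3.fun_mul h4)
    apply monotoneOn_of_deriv_nonneg (convex_Ico 0 1)
    · intro m' hm'
      exact ((hderiv m' ⟨by linarith [hm'.1], hm'.2⟩).continuousAt).continuousWithinAt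
    · intro m' hm'
      rw [interior_Ico] at hm'
      exact ((hderiv m' ⟨by linarith [hm'.1], hm'.2⟩).differentiableAt).differentiableWithinAt
    · intro m' hm'
      rw [interior_Ico] at hm'
      rw [(hderiv m' ⟨by linarith [hm'.1], hm'.2⟩).deriv]
      have h1m : (-1:ℝ) < m' := by linarith [hm'.1]
      rw [Lp_inv h1m hm'.2]
      have hD : (0:ℝ) < 1 - m' ^ 2 := by nlinarith [hm'.1, hm'.2]
      have key : 4 * (2 * m') - 2 * Lf m' * (2 / (1 - m' ^ 2)) * (1 - m' ^ 2)
          - Lf m' ^ 2 * (-(2 * m')) = 8 * m' - 4 * Lf m' + 2 * m' * Lf m' ^ 2 := by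
        field_simp
        ring
      have hval := hw1 m' ⟨hm'.1.le, hm'.2⟩
      nlinarith [hval, key]
  have h0 := hmono2 (Set.mem_Ico.mpr ⟨le_refl 0, one_pos⟩) hm hm.1
  simp only [Lf_zero] at h0
  nlinarith [h0]

noncomputable def psi (m : ℝ) : ℝ := Real.log (gf m) + gf m / 2 - Real.log (cf m)

lemma gf_deriv {m : ℝ} (hm : m ∈ Set.Ioo (0:ℝ) 1) :
    HasDerivAt gf ((((1 + m)⁻¹ + (1 - m)⁻¹) * m - Lf m) / m ^ 2) m := by
  have hL := hasDerivAt_Lf (by linarith [hm.1]) hm.2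
  have := hL.fun_div (hasDerivAt_id m) hm.1.ne'
  exact this.congr_deriv (by simp)

lemma cf_deriv {m : ℝ} (hm : m ∈ Set.Ioo (0:ℝ) 1) :
    HasDerivAt cf (Real.exp (Lf m / 2) * (((1 + m)⁻¹ + (1 - m)⁻¹) / 2)
      - Real.exp (-(Lf m / 2)) * (((1 + m)⁻¹ + (1 - m)⁻¹) / 2)) m := by
  have hL := hasDerivAt_Lf (by linarith [hm.1]) hm.2
  have h1 : HasDerivAt (fun m => Real.exp (Lf m / 2))
      (Real.exp (Lf m / 2) * (((1 + m)⁻¹ + (1 - m)⁻¹) / 2)) m := by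
    have := (hL.div_const 2).exp
    convert this using 1 <;> try ring
  have h2 : HasDerivAt (fun m => Real.exp (-(Lf m / 2)))
      (Real.exp (-(Lf m / 2)) * (-(((1 + m)⁻¹ + (1 - m)⁻¹) / 2))) m := by
    have := ((hL.div_const 2).fun_neg).exp
    convert this using 1 <;> try ring
  have := h1.fun_add h2
  unfold cf
  exact this.congr_deriv (by ring)

lemma psi_deriv {m : ℝ} (hm : m ∈ Set.Ioo (0:ℝ) 1) :
    HasDerivAt psi (2 / ((1 - m ^ 2) * Lf m) - Lf m / (2 * m ^ 2)) m := by
  have hgpos : 0 < gf m := by linarith [g_gt hm]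
  have hcpos := cf_pos m
  have hLpos := L_pos hm
  have h1m : (0:ℝ) < 1 - m := by linarith [hm.2]
  have h1p : (0:ℝ) < 1 + m := by linarith [hm.1]
  have hm2 : (0:ℝ) < 1 - m ^ 2 := by nlinarith
  have hg := gf_deriv hm
  have hc := cf_deriv hm
  have hψ := ((hg.log hgpos.ne').add (hg.div_const 2)).sub (hc.log hcpos.ne')
  set E := Real.exp (Lf m / 2) with hE
  have hEpos : 0 < E := Real.exp_pos _
  have hEneg : Real.exp (-(Lf m / 2)) = E⁻¹ := Real.exp_neg _
  have hE2 : E ^ 2 * (1 - m) = 1 + m := by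
    have h2 : E ^ 2 = Real.exp (Lf m) := by
      rw [hE, sq, ← Real.exp_add]
      norm_num
    have h3 : Real.exp (Lf m) = (1 + m) / (1 - m) := by
      rw [Lf, Real.exp_sub, Real.exp_log h1p, Real.exp_log h1m]
    rw [h2, h3]
    field_simp
  have htanh : E - E⁻¹ = m * (E + E⁻¹) := by
    field_simp
    linear_combination hE2
  have hcfE : cf m = E + E⁻¹ := by rw [cf, hEneg]
  have hT : (0:ℝ) < E + E⁻¹ := by positivity
  rw [Lp_inv (by linarith : (-1:ℝ) < m) hm.2, hEneg] at hψ
  have hψ2 : HasDerivAt psi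
      ((2 / (1 - m ^ 2) * m - Lf m) / m ^ 2 / gf m + (2 / (1 - m ^ 2) * m - Lf m) / m ^ 2 / 2
        - (E * (2 / (1 - m ^ 2) / 2) - E⁻¹ * (2 / (1 - m ^ 2) / 2)) / cf m) m := hψ
  convert hψ2 using 1
  have hcpart : (E * (2 / (1 - m ^ 2) / 2) - E⁻¹ * (2 / (1 - m ^ 2) / 2)) / cf m
      = 2 / (1 - m ^ 2) / 2 * m := by
    rw [hcfE, div_eq_iff hT.ne']
    linear_combination (2 / (1 - m ^ 2) / 2) * htanh
  rw [hcpart, gf]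
  have hLne := hLpos.ne'
  have hmne := hm.1.ne'
  field_simp
  ring

lemma psi_mono : MonotoneOn psi (Set.Ioo (0:ℝ) 1) := by
  apply monotoneOn_of_deriv_nonneg (convex_Ioo 0 1)
  · exact fun m hm => ((psi_deriv hm).continuousAt).continuousWithinAt
  · intro m hm
    rw [interior_Ioo] at hm
    exact ((psi_deriv hm).differentiableAt).differentiableWithinAt
  · intro m hm
    rw [interior_Ioo] at hm
    rw [(psi_deriv hm).deriv]
    have hLpos := L_pos hm
    have hm2 : (0:ℝ) < 1 - m ^ 2 := by nlinarith [hm.1, hm.2]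
    have hA : (0:ℝ) < 2 * m ^ 2 := by nlinarith [hm.1]
    have hB : (0:ℝ) < (1 - m ^ 2) * Lf m := mul_pos hm2 hLpos
    rw [sub_nonneg, div_le_div_iff₀ hA hB]
    nlinarith [L_sq_le ⟨hm.1.le, hm.2⟩]

lemma psi_lim : Tendsto psi (𝓝[>] (0:ℝ)) (𝓝 1) := by
  have h1 : Tendsto (fun m => Real.log (gf m)) (𝓝[>] (0:ℝ)) (𝓝 (Real.log 2)) :=
    ((Real.continuousAt_log (by norm_num)).tendsto).comp tendsto_g
  have h2 : Tendsto (fun m => gf m / 2) (𝓝[>] (0:ℝ)) (𝓝 1) := by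
    simpa using tendsto_g.div_const 2
  have h3 : Tendsto (fun m => Real.log (cf m)) (𝓝[>] (0:ℝ)) (𝓝 (Real.log 2)) :=
    ((Real.continuousAt_log (by norm_num)).tendsto).comp tendsto_c
  have := (h1.add h2).sub h3
  have heq : Real.log 2 + 1 - Real.log 2 = 1 := by ring
  rw [heq] at this
  exact this

lemma F_ge {m : ℝ} (hm : m ∈ Set.Ioo (0:ℝ) 1) :
    Real.exp 1 ≤ gf m * Real.exp (gf m / 2) / cf m := by
  have hψ1 : 1 ≤ psi m := by
    apply le_of_tendsto psi_lim
    filter_upwards [Ioo_mem_nhdsGT_of_mem (Set.left_mem_Ico.mpr hm.1)] with t ht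
    exact psi_mono ⟨ht.1, ht.2.trans hm.2⟩ hm (ht.2.le)
  have hgpos : 0 < gf m := by linarith [g_gt hm]
  have hcpos := cf_pos m
  have hexp : Real.exp (psi m) = gf m * Real.exp (gf m / 2) / cf m := by
    rw [psi, Real.exp_sub, Real.exp_add, Real.exp_log hgpos, Real.exp_log hcpos]
  calc Real.exp 1 ≤ Real.exp (psi m) := Real.exp_le_exp.mpr hψ1
    _ = _ := hexp

lemma B_lower {a0 m : ℝ} (ha0 : a0 ∈ Set.Ioo (0:ℝ) 1) (hm : m ∈ Set.Ioo (0:ℝ) 1) :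
    bcr a0 + (Lf m - 2 * m) ≤ Bf a0 m := by
  have hr : 0 < a0 / ((1 - a0) / 2) := by
    have := ha0.1; have := ha0.2
    apply div_pos ha0.1
    linarith
  have hBf : Bf a0 m = gf m + a0 / ((1 - a0) / 2) * (gf m * Real.exp (gf m / 2) / cf m) := by
    rw [Bf]; ring
  have hbcr : bcr a0 = 2 + a0 / ((1 - a0) / 2) * Real.exp 1 := by
    rw [bcr]; ring
  have hg : Lf m - 2 * m + 2 ≤ gf m := by
    rw [gf, le_div_iff₀ hm.1]
    nlinarith [L_gt hm, hm.2, L_pos hm]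
  have hF := mul_le_mul_of_nonneg_left (F_ge hm) hr.le
  rw [hBf, hbcr]
  linarith [hF, hg]


/-- Mean-field critical exponent `1/2` for the magnetization of the mean-field
soft-core Widom-Rowlinson model in the inverse-temperature direction: if `M β`
denotes, for `β > β_c`, the magnetization coordinate of the global maximizer of
`Φ_{β,α}` with `ν(1) > ν(-1)`, then `M β / (β - β_c)^{1/2} → c > 0` as `β ↓ β_c`. -/
theorem critical_exponent_inverse_temperature (a0 : ℝ) (ha0 : a0 ∈ Set.Ioo (0 : ℝ) 1)
    (M : ℝ → ℝ)
    (hM : ∀ β : ℝ, 2 + Real.exp 1 * a0 / ((1 - a0) / 2) < β →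
      0 < M β ∧ M β ≤ 1 ∧
        ∃ x : ℝ, 0 < x ∧ IsMaximizer β (symAlpha a0) (coordMeasure x (M β))) :
    ∃ c : ℝ, 0 < c ∧
      Tendsto (fun β : ℝ => M β / Real.sqrt (β - (2 + Real.exp 1 * a0 / ((1 - a0) / 2))))
        (𝓝[>] (2 + Real.exp 1 * a0 / ((1 - a0) / 2))) (𝓝 c) := by
  have hbc : (2 + Real.exp 1 * a0 / ((1 - a0) / 2)) = bcr a0 := rfl
  rw [hbc]
  have hprop : ∀ β : ℝ, bcr a0 < β → M β ∈ Set.Ioo (0:ℝ) 1 ∧ Bf a0 (M β) = β := by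
    intro β hβ
    obtain ⟨h1, h2, x, hx, hmax⟩ := hM β hβ
    obtain ⟨hlt, hB⟩ := B_eq ha0 hx h1 h2 hmax
    exact ⟨⟨h1, hlt⟩, hB⟩
  -- M tends to zero
  have hM0 : Tendsto M (𝓝[>] (bcr a0)) (𝓝 0) := by
    rw [Metric.tendsto_nhds]
    intro ε hε
    set ε' := min ε (1/2) with hε'def
    have hε'pos : 0 < ε' := lt_min hε (by norm_num)
    have hε'lt1 : ε' < 1 := lt_of_le_of_lt (min_le_right _ _) (by norm_num)
    have hδ : 0 < Lf ε' - 2 * ε' := by linarith [L_gt ⟨hε'pos, hε'lt1⟩]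
    filter_upwards [Ioo_mem_nhdsGT_of_mem
      (Set.left_mem_Ico.mpr (by linarith : bcr a0 < bcr a0 + (Lf ε' - 2 * ε')))]
      with β hβ
    obtain ⟨hmem, hB⟩ := hprop β hβ.1
    have hlt : M β < ε' := by
      by_contra hcon
      push_neg at hcon
      have hmono := L2m_mono.monotoneOn ⟨hε'pos.le, hε'lt1⟩ ⟨hmem.1.le, hmem.2⟩ hcon
      have := B_lower ha0 hmem
      rw [hB] at this
      linarith [hβ.2]
    rw [Real.dist_eq, sub_zero, abs_of_pos hmem.1]
    exact lt_of_lt_of_le hlt (min_le_left _ _)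
  -- the limit constant
  set lam := 2/3 + a0 / ((1 - a0) / 2) * Real.exp 1 / 6 with hlam
  have hr : 0 < a0 / ((1 - a0) / 2) := by
    apply div_pos ha0.1
    have := ha0.2
    linarith
  have hlampos : 0 < lam := by
    have := Real.exp_pos 1
    have h6 : 0 < a0 / ((1 - a0) / 2) * Real.exp 1 / 6 := by positivity
    rw [hlam]
    linarith
  refine ⟨(Real.sqrt lam)⁻¹, by positivity, ?_⟩
  have hMt : Tendsto M (𝓝[>] (bcr a0)) (𝓝[>] (0:ℝ)) := by
    rw [tendsto_nhdsWithin_iff]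
    refine ⟨hM0, ?_⟩
    filter_upwards [self_mem_nhdsWithin] with β (hβ : bcr a0 < β)
    exact (hprop β hβ).1.1
  have hRcomp : Tendsto (fun β => (Bf a0 (M β) - bcr a0) / (M β) ^ 2)
      (𝓝[>] (bcr a0)) (𝓝 lam) := (tendsto_R ha0).comp hMt
  have hsq := (hRcomp.sqrt).inv₀ (by positivity : Real.sqrt lam ≠ 0)
  refine hsq.congr' ?_
  filter_upwards [self_mem_nhdsWithin] with β (hβ : bcr a0 < β)
  obtain ⟨hmem, hB⟩ := hprop β hβ
  have hm0 : 0 < M β := hmem.1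
  rw [hB]
  rw [Real.sqrt_div (by linarith : (0:ℝ) ≤ β - bcr a0), Real.sqrt_sq hm0.le]
  rw [inv_div]
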